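/- Let f ∈ H² be not identically zero and let g be an inner function in H², i.e., a holomorphic function on 𝔻 such that multiplication by g is an isometry of H² (gh ∈ H² and ‖gh‖_{H²} = ‖h‖_{H²} for every h ∈ H²). Then for every n ∈ ℕ, the optimal polynomial approximants satisfy Q_n(1/(fg)) = conj(g(0)) · Q_n(1/f). -/

import Mathlib

open MeasureTheory Filter Metric Polynomial

noncomputable section

/-- The Hardy space `H²`, modelled as the space `ℓ²(ℕ, ℂ)` of square-summable
Taylor-coefficient sequences: `f : H2` represents the holomorphic function
`z ↦ ∑ₖ f k * z ^ k` on the unit disc, and the `lp`-norm of `f` is its `H²` norm. -/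
abbrev H2 := lp (fun _ : ℕ => ℂ) 2

/-- Value at `z` of the holomorphic function with Taylor coefficients `f`. -/
def h2Val (f : H2) (z : ℂ) : ℂ := ∑' k, f k * z ^ k

/-- `n`-th Taylor coefficient of the product of a polynomial `q` with the power series
having coefficients `a`. -/
def coeffMul (q : Polynomial ℂ) (a : ℕ → ℂ) (n : ℕ) : ℂ :=
  ∑ j ∈ Finset.range (n + 1), q.coeff j * a (n - j)

/-- Taylor coefficients of `q·f − 1`. -/
def errSeq (q : Polynomial ℂ) (f : H2) (n : ℕ) : ℂ :=
  coeffMul q (fun k => f k) n - if n = 0 then 1 else 0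

/-- The `H²` norm `‖q·f − 1‖_{H²}`. -/
def h2ErrNorm (q : Polynomial ℂ) (f : H2) : ℝ :=
  Real.sqrt (∑' n, ‖errSeq q f n‖ ^ 2)

/-- `Q` is an optimal polynomial approximant of order `n` of `1/f`: it has degree at
most `n` and minimizes `‖q·f − 1‖_{H²}` over all polynomials `q` of degree at most `n`. -/
def IsOpa (n : ℕ) (f : H2) (Q : Polynomial ℂ) : Prop :=
  Q.degree ≤ (n : WithBot ℕ) ∧
    ∀ q : Polynomial ℂ, q.degree ≤ (n : WithBot ℕ) → h2ErrNorm Q f ≤ h2ErrNorm q f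

open Classical in
/-- The optimal polynomial approximant `Q_n(1/f)` (well defined whenever the minimizer
exists and is unique, which is the case for every `f ≠ 0`). -/
def opa (n : ℕ) (f : H2) : Polynomial ℂ :=
  if h : ∃! Q : Polynomial ℂ, IsOpa n f Q then h.choose else 0

/-- Sup-distance of two functions over a set `E` (the distance in `C(E)`). -/
def supDist (E : Set ℂ) (u v : ℂ → ℂ) : ℝ := ⨆ z : E, ‖u z - v z‖

/-- `f` has universal optimal polynomial approximants on `E`: every continuous function
on `E` is the uniform limit on `E` of a subsequence of the sequence `Q_n(1/f)`. -/
def HasUniversalOpa (E : Set ℂ) (f : H2) : Prop :=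
  ∀ g : ℂ → ℂ, ContinuousOn g E →
    ∃ m : ℕ → ℕ, StrictMono m ∧
      TendstoUniformlyOn (fun s z => (opa (m s) f).eval z) g atTop E

/-- `E ⊆ 𝕋` has arc-length (Lebesgue) measure zero. -/
def circleNull (E : Set ℂ) : Prop :=
  volume {θ : ℝ | Complex.exp (θ * Complex.I) ∈ E} = 0

/-- Coefficients of the product of the power series with coefficients `g` and the power
series with coefficients `a` (Cauchy product). -/
def convSeq (g : ℕ → ℂ) (a : ℕ → ℂ) (n : ℕ) : ℂ :=
  ∑ j ∈ Finset.range (n + 1), g j * a (n - j)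

namespace OpaAux

/-! ### Power series identities -/

lemma mk_coeffMul (q : Polynomial ℂ) (a : ℕ → ℂ) :
    PowerSeries.mk (coeffMul q a) = (q : PowerSeries ℂ) * PowerSeries.mk a := by
  ext n
  rw [PowerSeries.coeff_mk, PowerSeries.coeff_mul,
    Finset.Nat.sum_antidiagonal_eq_sum_range_succ_mk]
  simp [coeffMul, Polynomial.coeff_coe]

lemma mk_convSeq (g a : ℕ → ℂ) :
    PowerSeries.mk (convSeq g a) = PowerSeries.mk g * PowerSeries.mk a := by
  ext n
  rw [PowerSeries.coeff_mk, PowerSeries.coeff_mul,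
    Finset.Nat.sum_antidiagonal_eq_sum_range_succ_mk]
  simp [convSeq]

lemma mk_inj {a b : ℕ → ℂ} (h : PowerSeries.mk a = PowerSeries.mk b) : a = b := by
  funext n
  simpa using congrArg (PowerSeries.coeff n) h

lemma coeffMul_convSeq (q : Polynomial ℂ) (g a : ℕ → ℂ) :
    coeffMul q (convSeq g a) = convSeq g (coeffMul q a) := by
  apply mk_inj
  rw [mk_coeffMul, mk_convSeq, mk_convSeq, mk_coeffMul]
  ring

lemma coeffMul_inj {a : ℕ → ℂ} (ha : a ≠ 0) {q q' : Polynomial ℂ}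
    (h : coeffMul q a = coeffMul q' a) : q = q' := by
  have h2 := congrArg PowerSeries.mk h
  rw [mk_coeffMul, mk_coeffMul] at h2
  have hma : PowerSeries.mk a ≠ 0 := by
    intro h0
    apply ha
    funext n
    simpa using congrArg (PowerSeries.coeff n) h0
  exact_mod_cast mul_right_cancel₀ hma h2

lemma coeffMul_C_mul (c : ℂ) (q : Polynomial ℂ) (a : ℕ → ℂ) :
    coeffMul (Polynomial.C c * q) a = fun n => c * coeffMul q a n := by
  funext n
  simp [coeffMul, Finset.mul_sum, mul_assoc]

lemma coeffMul_add (q q' : Polynomial ℂ) (a : ℕ → ℂ) :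
    coeffMul (q + q') a = fun n => coeffMul q a n + coeffMul q' a n := by
  funext n
  simp [coeffMul, add_mul, Finset.sum_add_distrib]

/-! ### The translation operators and `polyMul` -/

def transFun (j : ℕ) (a : ℕ → ℂ) : ℕ → ℂ := fun n => if j ≤ n then a (n - j) else 0

lemma two_toReal : (2 : ENNReal).toReal = 2 := by norm_num

lemma memℓp_transFun (j : ℕ) (f : H2) : Memℓp (transFun j (fun k => f k)) 2 := by
  apply memℓp_gen
  rw [two_toReal]
  apply (summable_nat_add_iff j).1
  have h : ∀ n : ℕ, ‖transFun j (fun k => f k) (n + j)‖ ^ (2:ℝ) = ‖f n‖ ^ (2:ℝ) := by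
    intro n
    simp [transFun]
  rw [funext h]
  have := (memℓp_gen_iff (by rw [two_toReal]; norm_num)).1 (lp.memℓp f)
  rwa [two_toReal] at this

def T (j : ℕ) (f : H2) : H2 := ⟨transFun j (fun k => f k), memℓp_transFun j f⟩

@[simp] lemma T_apply (j : ℕ) (f : H2) (k : ℕ) : (T j f) k = transFun j (fun i => f i) k := rfl

def polyMul (q : Polynomial ℂ) (f : H2) : H2 :=
  ∑ j ∈ Finset.range (q.natDegree + 1), q.coeff j • T j f

lemma sum_trans_eq (q : Polynomial ℂ) (a : ℕ → ℂ) {N : ℕ} (hN : q.natDegree < N) (k : ℕ) :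
    ∑ j ∈ Finset.range N, q.coeff j * transFun j a k = coeffMul q a k := by
  set M := max N (k + 1) with hM
  have h1 : ∑ j ∈ Finset.range N, q.coeff j * transFun j a k
      = ∑ j ∈ Finset.range M, q.coeff j * transFun j a k := by
    apply Finset.sum_subset (Finset.range_subset_range.2 (le_max_left _ _))
    intro j hj hj'
    have : q.natDegree < j := lt_of_lt_of_le hN (by
      simpa using Finset.mem_range.not.1 hj' |> le_of_not_gt)
    rw [q.coeff_eq_zero_of_natDegree_lt this, zero_mul]
  have h2 : coeffMul q a k = ∑ j ∈ Finset.range M, q.coeff j * transFun j a k := by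
    unfold coeffMul
    rw [Finset.sum_congr rfl (g := fun j => q.coeff j * transFun j a k) ?_]
    · apply Finset.sum_subset (Finset.range_subset_range.2 (le_max_right _ _))
      intro j hj hj'
      have hk : k < j := by
        have := Finset.mem_range.not.1 hj'
        omega
      simp [transFun, Nat.not_le.2 hk]
    · intro j hj
      have : j ≤ k := by simpa [Nat.lt_succ_iff] using Finset.mem_range.1 hj
      simp [transFun, this]
  rw [h1, h2]

lemma polyMul_apply (q : Polynomial ℂ) (f : H2) (k : ℕ) :
    (polyMul q f) k = coeffMul q (fun i => f i) k := by
  unfold polyMul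
  rw [lp.coeFn_sum]
  simp only [Finset.sum_apply, Pi.smul_apply, lp.coeFn_smul, T_apply, smul_eq_mul]
  exact sum_trans_eq q _ (Nat.lt_succ_self _) k

lemma polyMul_eq_sum (q : Polynomial ℂ) (f : H2) {N : ℕ} (hN : q.natDegree < N) :
    polyMul q f = ∑ j ∈ Finset.range N, q.coeff j • T j f := by
  apply lp.ext
  funext k
  rw [polyMul_apply]
  have : (↑(∑ j ∈ Finset.range N, q.coeff j • T j f) : ℕ → ℂ) k
      = ∑ j ∈ Finset.range N, q.coeff j * transFun j (fun i => f i) k := by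
    rw [lp.coeFn_sum]
    simp only [Finset.sum_apply, Pi.smul_apply, lp.coeFn_smul, T_apply, smul_eq_mul]
  rw [this, sum_trans_eq q _ hN]

lemma polyMul_C_mul (c : ℂ) (q : Polynomial ℂ) (f : H2) :
    polyMul (Polynomial.C c * q) f = c • polyMul q f := by
  apply lp.ext
  funext k
  rw [polyMul_apply, coeffMul_C_mul]
  have : (↑(c • polyMul q f) : ℕ → ℂ) k = c * (polyMul q f) k := by
    rw [lp.coeFn_smul]; rfl
  rw [this, polyMul_apply]

lemma polyMul_add (q q' : Polynomial ℂ) (f : H2) :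
    polyMul (q + q') f = polyMul q f + polyMul q' f := by
  apply lp.ext
  funext k
  rw [polyMul_apply, coeffMul_add]
  have : (↑(polyMul q f + polyMul q' f) : ℕ → ℂ) k = (polyMul q f) k + (polyMul q' f) k := by
    rw [lp.coeFn_add]; rfl
  rw [this, polyMul_apply, polyMul_apply]

end OpaAux

namespace OpaAux

/-! ### `h2ErrNorm` as a norm in `H2` -/

def e0 : H2 := lp.single 2 0 (1:ℂ)

lemma e0_apply (k : ℕ) : (e0 : ℕ → ℂ) k = if k = 0 then 1 else 0 := by
  rcases eq_or_ne k 0 with h | h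
  · subst h; simp [e0, lp.single_apply_self]
  · rw [if_neg h]; exact lp.single_apply_ne 2 0 _ h

lemma norm_e0 : ‖e0‖ = 1 := by
  have := lp.norm_single (E := fun _ : ℕ => ℂ) (p := 2)
    (by norm_num) 0 (1:ℂ)
  simpa [e0] using this

lemma norm_eq_sqrt_tsum (x : H2) : ‖x‖ = Real.sqrt (∑' k, ‖x k‖ ^ 2) := by
  rw [lp.norm_eq_tsum_rpow (by rw [two_toReal]; norm_num) x, two_toReal]
  have h : ∀ k : ℕ, ‖x k‖ ^ (2:ℝ) = ‖x k‖ ^ (2:ℕ) := fun k => by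
    rw [show (2:ℝ) = ((2:ℕ):ℝ) by norm_num, Real.rpow_natCast]
  rw [tsum_congr h, Real.sqrt_eq_rpow]

lemma h2ErrNorm_eq (q : Polynomial ℂ) (f : H2) :
    h2ErrNorm q f = ‖polyMul q f - e0‖ := by
  rw [norm_eq_sqrt_tsum, h2ErrNorm]
  congr 1
  apply tsum_congr
  intro k
  congr 2
  rw [errSeq]
  have : (↑(polyMul q f - e0) : ℕ → ℂ) k = (polyMul q f) k - (e0 : ℕ → ℂ) k := by
    rw [lp.coeFn_sub]; rfl
  rw [this, polyMul_apply, e0_apply]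

/-! ### more `polyMul` algebra -/

lemma polyMul_zero (f : H2) : polyMul 0 f = 0 := by
  apply lp.ext
  funext k
  rw [polyMul_apply]
  simp [coeffMul, lp.coeFn_zero]

lemma polyMul_sum {ι : Type*} (s : Finset ι) (p : ι → Polynomial ℂ) (f : H2) :
    polyMul (∑ j ∈ s, p j) f = ∑ j ∈ s, polyMul (p j) f := by
  classical
  induction s using Finset.induction_on with
  | empty => simp [polyMul_zero]
  | insert _ _ h ih =>
    rw [Finset.sum_insert h, polyMul_add, ih, Finset.sum_insert h]

lemma polyMul_X_pow (j : ℕ) (f : H2) : polyMul (Polynomial.X ^ j) f = T j f := by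
  apply lp.ext
  funext k
  rw [polyMul_apply]
  simp only [T_apply, coeffMul, Polynomial.coeff_X_pow]
  rw [Finset.sum_congr rfl (g := fun i => if i = j then (fun m => f m) (k - i) else 0)
    (fun i _ => by by_cases h : i = j <;> simp [h])]
  rw [Finset.sum_ite_eq' (Finset.range (k+1)) j]
  simp [transFun, Nat.lt_succ_iff]

lemma degree_C_mul_le (c : ℂ) (q : Polynomial ℂ) :
    (Polynomial.C c * q).degree ≤ q.degree := by
  refine le_trans (Polynomial.degree_mul_le _ _) ?_
  have := add_le_add_left (Polynomial.degree_C_le (a := c)) q.degree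
  rwa [zero_add] at this

/-! ### Existence and uniqueness of the optimal polynomial approximant -/

def spanT (n : ℕ) (f : H2) : Submodule ℂ H2 :=
  Submodule.span ℂ (Set.range fun j : Fin (n+1) => T j f)

lemma polyMul_mem_spanT {n : ℕ} {f : H2} {q : Polynomial ℂ} (hq : q.degree ≤ (n : WithBot ℕ)) :
    polyMul q f ∈ spanT n f := by
  have hnd : q.natDegree < n + 1 := Nat.lt_succ_of_le (Polynomial.natDegree_le_iff_degree_le.2 hq)
  rw [polyMul_eq_sum q f hnd]
  exact Submodule.sum_mem _ fun j hj => Submodule.smul_mem _ _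
    (Submodule.subset_span ⟨⟨j, Finset.mem_range.1 hj⟩, rfl⟩)

lemma exists_poly_of_mem_spanT {n : ℕ} {f : H2} {x : H2} (hx : x ∈ spanT n f) :
    ∃ q : Polynomial ℂ, q.degree ≤ (n : WithBot ℕ) ∧ polyMul q f = x := by
  rw [spanT, Submodule.mem_span_range_iff_exists_fun] at hx
  obtain ⟨c, hc⟩ := hx
  refine ⟨∑ j : Fin (n+1), Polynomial.C (c j) * Polynomial.X ^ (j:ℕ), ?_, ?_⟩
  · refine le_trans (Polynomial.degree_sum_le _ _) ?_
    refine Finset.sup_le fun j _ => ?_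
    refine le_trans (Polynomial.degree_C_mul_X_pow_le _ _) ?_
    exact_mod_cast Nat.cast_le.2 (Nat.lt_succ_iff.1 j.isLt)
  · rw [polyMul_sum]
    rw [← hc]
    refine Finset.sum_congr rfl fun j _ => ?_
    rw [polyMul_C_mul, polyMul_X_pow]

lemma coe_ne_zero {f : H2} (hf : f ≠ 0) : (fun k => (f : ℕ → ℂ) k) ≠ 0 := by
  intro h
  apply hf
  apply lp.ext
  funext k
  exact congrFun h k

lemma polyMul_inj {f : H2} (hf : f ≠ 0) {q q' : Polynomial ℂ}
    (h : polyMul q f = polyMul q' f) : q = q' := by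
  apply coeffMul_inj (coe_ne_zero hf)
  funext k
  rw [← polyMul_apply, ← polyMul_apply, h]

lemma exists_unique_isOpa {f : H2} (hf : f ≠ 0) (n : ℕ) :
    ∃! Q : Polynomial ℂ, IsOpa n f Q := by
  haveI : FiniteDimensional ℂ (spanT n f) :=
    FiniteDimensional.span_of_finite ℂ (Set.finite_range _)
  obtain ⟨v, hvK, hmin⟩ := Submodule.exists_norm_eq_iInf_of_complete_subspace (K := spanT n f)
    ((spanT n f).complete_of_finiteDimensional) e0
  have hminle : ∀ w ∈ spanT n f, ‖e0 - v‖ ≤ ‖e0 - w‖ := by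
    intro w hw
    rw [hmin]
    exact ciInf_le ⟨0, by rintro r ⟨i, rfl⟩; exact norm_nonneg _⟩ (⟨w, hw⟩ : (spanT n f : Set H2))
  obtain ⟨Q, hQdeg, hQv⟩ := exists_poly_of_mem_spanT hvK
  have hQopa : IsOpa n f Q := by
    refine ⟨hQdeg, fun q hq => ?_⟩
    rw [h2ErrNorm_eq, h2ErrNorm_eq, ← norm_sub_rev e0, ← norm_sub_rev e0 (polyMul q f), hQv]
    exact hminle _ (polyMul_mem_spanT hq)
  refine ⟨Q, hQopa, fun Q' hQ' => ?_⟩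
  -- uniqueness via the parallelogram law
  have hd : h2ErrNorm Q' f = h2ErrNorm Q f :=
    le_antisymm (hQ'.2 Q hQopa.1) (hQopa.2 Q' hQ'.1)
  have hdu : ‖polyMul Q f - e0‖ = h2ErrNorm Q f := (h2ErrNorm_eq Q f).symm
  have hdu' : ‖polyMul Q' f - e0‖ = h2ErrNorm Q f := by
    rw [← hd]; exact (h2ErrNorm_eq Q' f).symm
  have hdegm : (Polynomial.C ((1:ℂ)/2) * (Q + Q')).degree ≤ (n : WithBot ℕ) :=
    le_trans (degree_C_mul_le _ _) (le_trans (Polynomial.degree_add_le _ _)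
      (max_le hQopa.1 hQ'.1))
  have hmd : h2ErrNorm Q f ≤ ‖((1:ℂ)/2) • (polyMul Q f + polyMul Q' f) - e0‖ := by
    have h1 := hQopa.2 _ hdegm
    rwa [h2ErrNorm_eq (Polynomial.C ((1:ℂ)/2) * (Q + Q')) f, polyMul_C_mul, polyMul_add]
      at h1
  have h2m : (2:ℂ) • (((1:ℂ)/2) • (polyMul Q f + polyMul Q' f) - e0)
      = (polyMul Q f - e0) + (polyMul Q' f - e0) := by
    rw [smul_sub, smul_smul]
    have h21 : (2:ℂ) * ((1:ℂ)/2) = 1 := by norm_num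
    rw [h21, one_smul, two_smul]
    abel
  have hpar := parallelogram_law_with_norm ℂ (polyMul Q f - e0) (polyMul Q' f - e0)
  have hab : ‖(polyMul Q f - e0) + (polyMul Q' f - e0)‖
      = 2 * ‖((1:ℂ)/2) • (polyMul Q f + polyMul Q' f) - e0‖ := by
    rw [← h2m, norm_smul]
    have h2c : ‖(2:ℂ)‖ = 2 := by rw [Complex.norm_two]
    rw [h2c]
  have habba : (polyMul Q f - e0) - (polyMul Q' f - e0) = polyMul Q f - polyMul Q' f := by
    abel
  rw [hab, habba, hdu, hdu'] at hpar
  have huu' : ‖polyMul Q f - polyMul Q' f‖ = 0 := by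
    have hd0 : 0 ≤ h2ErrNorm Q f := Real.sqrt_nonneg _
    nlinarith [norm_nonneg (polyMul Q f - polyMul Q' f),
      mul_self_le_mul_self hd0 hmd]
  have heq : polyMul Q f = polyMul Q' f := by rwa [← sub_eq_zero, ← norm_eq_zero]
  exact (polyMul_inj hf heq).symm

lemma isOpa_opa {f : H2} (hf : f ≠ 0) (n : ℕ) : IsOpa n f (opa n f) := by
  have h := exists_unique_isOpa hf n
  rw [opa, dif_pos h]
  exact h.choose_spec.1

lemma opa_eq {f : H2} (hf : f ≠ 0) {n : ℕ} {Q : Polynomial ℂ} (hQ : IsOpa n f Q) :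
    opa n f = Q := by
  have h := exists_unique_isOpa hf n
  rw [opa, dif_pos h]
  exact (h.choose_spec.2 Q hQ).symm

end OpaAux

/-- If `g` is inner (multiplication by `g` is an isometry of `H²`;
here `g` is given by its Taylor-coefficient sequence, so `g(0) = g 0`) and `f ∈ H²`
is nonzero, then `Q_n(1/(fg)) = conj (g 0) • Q_n(1/f)` for every `n`. -/
theorem opa_inner_multiple (f : H2) (hf : f ≠ 0) (g : ℕ → ℂ)
    (hmem : ∀ h : H2, Memℓp (convSeq g (fun k => h k)) 2)
    (hiso : ∀ h : H2, ‖(⟨convSeq g (fun k => h k), hmem h⟩ : H2)‖ = ‖h‖)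
    (n : ℕ) :
    opa n (⟨convSeq g (fun k => f k), hmem f⟩ : H2) =
      Polynomial.C ((starRingEnd ℂ) (g 0)) * opa n f := by
  classical
  set G : H2 := ⟨convSeq g (fun k => f k), hmem f⟩ with hG
  have hGne : G ≠ 0 := by
    intro h0
    apply hf
    have h1 : ‖G‖ = ‖f‖ := hiso f
    rw [h0, norm_zero] at h1
    exact norm_eq_zero.1 h1.symm
  have hpm : ∀ q : Polynomial ℂ, OpaAux.polyMul q G
      = (⟨convSeq g (fun k => (OpaAux.polyMul q f) k), hmem (OpaAux.polyMul q f)⟩ : H2) := by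
    intro q
    apply lp.ext
    funext k
    rw [OpaAux.polyMul_apply]
    show coeffMul q (fun i => G i) k = convSeq g (fun i => (OpaAux.polyMul q f) i) k
    have h1 : (fun i => (OpaAux.polyMul q f : ℕ → ℂ) i) = coeffMul q (fun i => f i) := by
      funext i; exact OpaAux.polyMul_apply q f i
    have h2 : (fun i => (G : ℕ → ℂ) i) = convSeq g (fun i => f i) := rfl
    rw [h1, h2]
    exact congrFun (OpaAux.coeffMul_convSeq q g (fun i => f i)) k
  set c := (starRingEnd ℂ) (g 0) with hc
  have key : ∀ u : H2, ‖(⟨convSeq g (fun k => u k), hmem u⟩ : H2) - OpaAux.e0‖ ^ 2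
      = ‖u - c • OpaAux.e0‖ ^ 2 + (1 - ‖g 0‖ ^ 2) := by
    intro u
    set Mu : H2 := ⟨convSeq g (fun k => u k), hmem u⟩ with hMu
    have hnorm : ‖Mu‖ = ‖u‖ := hiso u
    have hMu0 : (Mu : ℕ → ℂ) 0 = g 0 * u 0 := by
      show convSeq g (fun k => u k) 0 = _
      simp [convSeq]
    have hin1 : (inner ℂ Mu OpaAux.e0 : ℂ) = (starRingEnd ℂ) (g 0 * u 0) := by
      rw [OpaAux.e0, lp.inner_single_right, hMu0]
      simp [RCLike.inner_apply]
    have hin2 : (inner ℂ u (c • OpaAux.e0) : ℂ) = c * (starRingEnd ℂ) (u 0) := by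
      rw [inner_smul_right, OpaAux.e0, lp.inner_single_right]
      simp [RCLike.inner_apply]
    rw [norm_sub_sq (𝕜 := ℂ), norm_sub_sq (𝕜 := ℂ), hin1, hin2, hnorm, OpaAux.norm_e0,
      norm_smul, OpaAux.norm_e0]
    have e1 : (starRingEnd ℂ) (g 0 * u 0) = c * (starRingEnd ℂ) (u 0) := by
      rw [hc, map_mul]
    have e2 : ‖c‖ = ‖g 0‖ := by rw [hc]; exact RCLike.norm_conj _
    rw [e1, e2]
    ring
  have hQF := OpaAux.isOpa_opa hf n
  have hclaim : IsOpa n G (Polynomial.C c * opa n f) := by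
    constructor
    · exact le_trans (OpaAux.degree_C_mul_le _ _) hQF.1
    · intro q hq
      rw [OpaAux.h2ErrNorm_eq, OpaAux.h2ErrNorm_eq, hpm, hpm]
      have hsq : ∀ A B : ℝ, 0 ≤ A → 0 ≤ B → A^2 ≤ B^2 → A ≤ B := by
        intro A B hA hB h
        nlinarith
      apply hsq _ _ (norm_nonneg _) (norm_nonneg _)
      rw [key, key]
      have main : ‖OpaAux.polyMul (Polynomial.C c * opa n f) f - c • OpaAux.e0‖
          ≤ ‖OpaAux.polyMul q f - c • OpaAux.e0‖ := by
        rw [OpaAux.polyMul_C_mul, ← smul_sub]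
        by_cases hc0 : c = 0
        · simp [hc0]
        · have hqf : Polynomial.C c * (Polynomial.C c⁻¹ * q) = q := by
            rw [← mul_assoc, ← Polynomial.C_mul, mul_inv_cancel₀ hc0, Polynomial.C_1, one_mul]
          have hdeg : (Polynomial.C c⁻¹ * q).degree ≤ (n : WithBot ℕ) :=
            le_trans (OpaAux.degree_C_mul_le _ _) hq
          calc ‖c • (OpaAux.polyMul (opa n f) f - OpaAux.e0)‖
              = ‖c‖ * ‖OpaAux.polyMul (opa n f) f - OpaAux.e0‖ := norm_smul _ _
            _ ≤ ‖c‖ * ‖OpaAux.polyMul (Polynomial.C c⁻¹ * q) f - OpaAux.e0‖ := by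
                apply mul_le_mul_of_nonneg_left _ (norm_nonneg _)
                rw [← OpaAux.h2ErrNorm_eq, ← OpaAux.h2ErrNorm_eq]
                exact hQF.2 _ hdeg
            _ = ‖c • (OpaAux.polyMul (Polynomial.C c⁻¹ * q) f - OpaAux.e0)‖ :=
                (norm_smul _ _).symm
            _ = ‖OpaAux.polyMul q f - c • OpaAux.e0‖ := by
                rw [smul_sub, ← OpaAux.polyMul_C_mul, hqf]
      have hp2 := pow_le_pow_left₀ (norm_nonneg _) main 2
      linarith
  exact OpaAux.opa_eq hGne hclaim

end
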